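/- arXiv:2107.13828 — 2 statements merged into one kernel-verified Lean document; each statement's English description precedes it below -/
import Mathlib

section
/- Let Ω ⊂ ℝ^d be a bounded open Lipschitz set and let s_n → 0⁺. For every u ∈ L²(Ω) and every sequence u^n ⇀ u weakly in L²(Ω), it holds that (dω_d/2)‖u‖²_{L²(Ω)} ≤ liminf_{n→∞} s_n [ũ^n]²_{s_n}, where ω_d is the volume of the unit ball in ℝ^d. -/
open MeasureTheory Filter Topology ENNReal Metric Set

lemma polar_lemma (d : ℕ) (hd : 0 < d) (ρ spar : ℝ) (hρ : 0 < ρ) (hs : 0 < spar) :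
    ∫⁻ z : EuclideanSpace ℝ (Fin d),
        ENNReal.ofReal (Set.indicator (Set.Ici ρ)
          (fun r => r ^ (-((d : ℝ) + 2 * spar))) ‖z‖)
      = ENNReal.ofReal ((d : ℝ) *
          (volume (Metric.ball (0 : EuclideanSpace ℝ (Fin d)) 1)).toReal *
          (ρ ^ (-(2 * spar)) / (2 * spar))) := by
  set E := EuclideanSpace ℝ (Fin d)
  haveI : Nontrivial E := by
    apply Module.nontrivial_of_finrank_pos (R := ℝ)
    rw [finrank_euclideanSpace_fin]; exact hd
  set p : ℝ := (d : ℝ) + 2 * spar with hp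
  have hppos : 0 < p := by positivity
  set f : ℝ → ℝ := fun r => r ^ (-p) with hf
  have hmeas : Measurable fun z : E => Set.indicator (Set.Ici ρ) f ‖z‖ := by
    exact ((measurable_id.pow_const _).indicator measurableSet_Ici).comp measurable_norm
  have hnonneg : ∀ z : E, 0 ≤ Set.indicator (Set.Ici ρ) f ‖z‖ := by
    intro z
    apply Set.indicator_nonneg
    intro r hr
    exact Real.rpow_nonneg (le_trans hρ.le hr) _
  -- integrability
  have hint : Integrable (fun z : E => Set.indicator (Set.Ici ρ) f ‖z‖) := by
    have hnr : (Module.finrank ℝ E : ℝ) < p := by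
      rw [finrank_euclideanSpace_fin]; simp only [hp]; linarith
    have base := (integrable_one_add_norm (E := E) (μ := volume) hnr).const_mul
      ((1 + 1/ρ) ^ p)
    refine base.mono' hmeas.aestronglyMeasurable ?_
    filter_upwards with z
    rw [Real.norm_of_nonneg (hnonneg z)]
    by_cases hz : ‖z‖ ∈ Set.Ici ρ
    · rw [Set.indicator_of_mem hz]
      have hz' : ρ ≤ ‖z‖ := hz
      have hzpos : 0 < ‖z‖ := lt_of_lt_of_le hρ hz'
      have h1 : 1 + ‖z‖ ≤ (1 + 1/ρ) * ‖z‖ := by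
        rw [add_mul, one_mul]
        have : 1 ≤ 1/ρ * ‖z‖ := by
          rw [div_mul_eq_mul_div, one_mul, le_div_iff₀ hρ, one_mul]; exact hz'
        linarith
      have h2 : (1 + ‖z‖) ^ p ≤ ((1 + 1/ρ) ^ p) * ‖z‖ ^ p := by
        rw [← Real.mul_rpow (by positivity) (le_of_lt hzpos)]
        exact Real.rpow_le_rpow (by positivity) h1 hppos.le
      have hA : (0:ℝ) < ‖z‖ ^ p := Real.rpow_pos_of_pos hzpos _
      have hB : (0:ℝ) < (1 + ‖z‖) ^ p := Real.rpow_pos_of_pos (by positivity) _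
      show ‖z‖ ^ (-p) ≤ (1 + 1/ρ) ^ p * (1 + ‖z‖) ^ (-p)
      rw [Real.rpow_neg hzpos.le, Real.rpow_neg (by positivity : (0:ℝ) ≤ 1 + ‖z‖),
        inv_eq_one_div, inv_eq_one_div, mul_one_div, div_le_div_iff₀ hA hB, one_mul]
      linarith [h2]
    · rw [Set.indicator_of_notMem hz]
      positivity
  -- value of the Bochner integral
  have hval : (∫ z : E, Set.indicator (Set.Ici ρ) f ‖z‖)
      = (d : ℝ) * (volume (Metric.ball (0 : E) 1)).toReal * (ρ ^ (-(2 * spar)) / (2 * spar)) := by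
    rw [integral_fun_norm_addHaar (volume : Measure E) (Set.indicator (Set.Ici ρ) f)]
    have hdim : Module.finrank ℝ E = d := finrank_euclideanSpace_fin
    rw [hdim]
    have h1 : (∫ y in Set.Ioi (0:ℝ), y ^ (d - 1) • Set.indicator (Set.Ici ρ) f y)
        = ρ ^ (-(2 * spar)) / (2 * spar) := by
      have : (fun y : ℝ => y ^ (d - 1) • Set.indicator (Set.Ici ρ) f y)
          = Set.indicator (Set.Ici ρ) (fun y => y ^ (d - 1) * f y) := by
        funext y
        by_cases hy : y ∈ Set.Ici ρ
        · rw [Set.indicator_of_mem hy, Set.indicator_of_mem hy, smul_eq_mul]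
        · rw [Set.indicator_of_notMem hy, Set.indicator_of_notMem hy, smul_zero]
      rw [this, setIntegral_indicator measurableSet_Ici]
      have hss : Set.Ioi (0:ℝ) ∩ Set.Ici ρ = Set.Ici ρ := by
        apply Set.inter_eq_right.mpr
        intro y hy
        exact lt_of_lt_of_le hρ hy
      rw [hss, integral_Ici_eq_integral_Ioi]
      rw [setIntegral_congr_fun measurableSet_Ioi
        (g := fun y : ℝ => y ^ (-1 - 2 * spar)) ?_]
      · rw [integral_Ioi_rpow_of_lt (by linarith) hρ]
        rw [show (-1 - 2*spar + 1) = -(2*spar) by ring, div_neg, neg_div, neg_neg]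
      · intro y hy
        have hy0 : 0 < y := lt_of_lt_of_le hρ (le_of_lt hy)
        show y ^ (d - 1) * y ^ (-p) = y ^ (-1 - 2 * spar)
        rw [← Real.rpow_natCast y (d - 1), ← Real.rpow_add hy0]
        congr 1
        rw [Nat.cast_sub hd, Nat.cast_one, hp]
        ring
    rw [h1, nsmul_eq_mul, smul_eq_mul, measureReal_def]
    ring
  rw [← hval, ← ofReal_integral_eq_lintegral_ofReal hint
    (Filter.Eventually.of_forall hnonneg)]

noncomputable def gagliardo (d : ℕ) (s : ℝ) (u : EuclideanSpace ℝ (Fin d) → ℝ) : ℝ≥0∞ :=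
  ∫⁻ x, ∫⁻ y, ENNReal.ofReal ((u x - u y) ^ 2 / ‖x - y‖ ^ ((d : ℝ) + 2 * s))

lemma key_est (d : ℕ) (hd : 0 < d) (Ω : Set (EuclideanSpace ℝ (Fin d))) (ρ : ℝ) (hρ : 0 < ρ)
    (hΩ : ∀ x ∈ Ω, ∀ y ∈ Ω, ‖x - y‖ < ρ)
    (spar : ℝ) (hs : 0 < spar) (v : EuclideanSpace ℝ (Fin d) → ℝ)
    (hv : AEMeasurable v volume) (hvs : ∀ x, x ∉ Ω → v x = 0) :
    ENNReal.ofReal ((d : ℝ) * (volume (Metric.ball (0 : EuclideanSpace ℝ (Fin d)) 1)).toReal / 2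
        * ρ ^ (-(2 * spar))) * ∫⁻ x, ENNReal.ofReal (v x ^ 2)
      ≤ ENNReal.ofReal spar * gagliardo d spar v := by
  set ω : ℝ := (volume (Metric.ball (0 : EuclideanSpace ℝ (Fin d)) 1)).toReal with hω
  have hωnn : 0 ≤ ω := ENNReal.toReal_nonneg
  set p : ℝ := (d : ℝ) + 2 * spar with hp
  set g : EuclideanSpace ℝ (Fin d) → ℝ≥0∞ := fun z =>
    ENNReal.ofReal (Set.indicator (Set.Ici ρ) (fun r => r ^ (-p)) ‖z‖) with hg
  have hgmeas : Measurable g :=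
    (measurable_ofReal.comp
      (((measurable_id.pow_const _).indicator measurableSet_Ici).comp measurable_norm))
  have hI : ∫⁻ z, g z = ENNReal.ofReal ((d : ℝ) * ω * (ρ ^ (-(2 * spar)) / (2 * spar))) :=
    polar_lemma d hd ρ spar hρ hs
  -- pointwise bound
  have step1 : ∀ x y : EuclideanSpace ℝ (Fin d), ENNReal.ofReal (v x ^ 2) * g (x - y)
      ≤ ENNReal.ofReal ((v x - v y) ^ 2 / ‖x - y‖ ^ p) := by
    intro x y
    by_cases hx : x ∈ Ω
    · by_cases hr : ‖x - y‖ ∈ Set.Ici ρ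
      · have hy : y ∉ Ω := by
          intro hy
          exact absurd (hΩ x hx y hy) (not_lt.2 hr)
        have hvy : v y = 0 := hvs y hy
        have hrpos : 0 < ‖x - y‖ := lt_of_lt_of_le hρ hr
        rw [hg]
        simp only
        rw [Set.indicator_of_mem hr, ← ENNReal.ofReal_mul (sq_nonneg _)]
        apply ENNReal.ofReal_le_ofReal
        rw [hvy, sub_zero, Real.rpow_neg hrpos.le, div_eq_mul_inv]
      · rw [hg]
        simp only
        rw [Set.indicator_of_notMem hr]
        simp
    · rw [hvs x hx]
      simp
  -- integrate in y
  have step2 : ∀ x : EuclideanSpace ℝ (Fin d), ENNReal.ofReal (v x ^ 2) * ∫⁻ z, g z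
      ≤ ∫⁻ y, ENNReal.ofReal ((v x - v y) ^ 2 / ‖x - y‖ ^ p) := by
    intro x
    have htrans : ∫⁻ y, g (x - y) = ∫⁻ z, g z :=
      (Measure.measurePreserving_sub_left volume x).lintegral_comp hgmeas
    calc ENNReal.ofReal (v x ^ 2) * ∫⁻ z, g z
        = ∫⁻ y, ENNReal.ofReal (v x ^ 2) * g (x - y) := by
          rw [lintegral_const_mul' _ _ ENNReal.ofReal_ne_top, htrans]
      _ ≤ _ := lintegral_mono fun y => step1 x y
  -- integrate in x
  have step3 : (∫⁻ x, ENNReal.ofReal (v x ^ 2)) * (∫⁻ z, g z) ≤ gagliardo d spar v := by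
    rw [← lintegral_mul_const'' _ ((hv.pow_const 2).ennreal_ofReal)]
    exact lintegral_mono step2
  calc ENNReal.ofReal ((d : ℝ) * ω / 2 * ρ ^ (-(2 * spar))) * ∫⁻ x, ENNReal.ofReal (v x ^ 2)
      = ENNReal.ofReal spar * (ENNReal.ofReal ((d : ℝ) * ω * (ρ ^ (-(2 * spar)) / (2 * spar)))
          * ∫⁻ x, ENNReal.ofReal (v x ^ 2)) := by
        rw [← mul_assoc, ← ENNReal.ofReal_mul hs.le]
        congr 2
        field_simp
    _ = ENNReal.ofReal spar * ((∫⁻ x, ENNReal.ofReal (v x ^ 2)) * (∫⁻ z, g z)) := by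
        rw [hI]; ring_nf
    _ ≤ ENNReal.ofReal spar * gagliardo d spar v := by
        exact mul_le_mul_right step3 _

lemma cauchy_schwarz_int {d : ℕ} (u v : EuclideanSpace ℝ (Fin d) → ℝ)
    (hu : MemLp u 2 volume) (hv : MemLp v 2 volume) :
    (∫ x, v x * u x) ^ 2 ≤ (∫ x, v x ^ 2) * (∫ x, u x ^ 2) := by
  set F : Lp ℝ 2 (volume : Measure (EuclideanSpace ℝ (Fin d))) := hv.toLp v with hF
  set G : Lp ℝ 2 (volume : Measure (EuclideanSpace ℝ (Fin d))) := hu.toLp u with hG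
  have hFG : (inner ℝ F G : ℝ) = ∫ x, v x * u x := by
    rw [L2.inner_def]
    apply integral_congr_ae
    filter_upwards [hv.coeFn_toLp, hu.coeFn_toLp] with x h1 h2
    rw [h1, h2, RCLike.inner_apply, starRingEnd_apply, star_trivial, mul_comm]
  have hFF : (inner ℝ F F : ℝ) = ∫ x, v x ^ 2 := by
    rw [L2.inner_def]
    apply integral_congr_ae
    filter_upwards [hv.coeFn_toLp] with x h1
    rw [h1, RCLike.inner_apply, starRingEnd_apply, star_trivial, ← sq]
  have hGG : (inner ℝ G G : ℝ) = ∫ x, u x ^ 2 := by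
    rw [L2.inner_def]
    apply integral_congr_ae
    filter_upwards [hu.coeFn_toLp] with x h2
    rw [h2, RCLike.inner_apply, starRingEnd_apply, star_trivial, ← sq]
  have := real_inner_mul_inner_self_le F G
  rw [hFG, hFF, hGG] at this
  nlinarith [this]

/-- Γ-liminf inequality as `s → 0⁺`. -/
theorem stmt1 (d : ℕ) (Ω : Set (EuclideanSpace ℝ (Fin d)))
    (hΩopen : IsOpen Ω) (hΩbdd : Bornology.IsBounded Ω)
    (s : ℕ → ℝ) (hs : ∀ n, s n ∈ Set.Ioo (0 : ℝ) 1) (hs0 : Tendsto s atTop (𝓝 0))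
    (u : EuclideanSpace ℝ (Fin d) → ℝ) (hu : MemLp u 2 volume)
    (husupp : ∀ x, x ∉ Ω → u x = 0)
    (un : ℕ → EuclideanSpace ℝ (Fin d) → ℝ)
    (hun : ∀ n, MemLp (un n) 2 volume)
    (hunsupp : ∀ n, ∀ x, x ∉ Ω → un n x = 0)
    (hweak : ∀ g : EuclideanSpace ℝ (Fin d) → ℝ, MemLp g 2 volume →
      Tendsto (fun n => ∫ x, un n x * g x) atTop (𝓝 (∫ x, u x * g x))) :
    ENNReal.ofReal ((d : ℝ) * (volume (Metric.ball (0 : EuclideanSpace ℝ (Fin d)) 1)).toReal / 2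
        * ∫ x, (u x) ^ 2)
      ≤ Filter.liminf (fun n => ENNReal.ofReal (s n) * gagliardo d (s n) (un n)) atTop := by
  set ω : ℝ := (volume (Metric.ball (0 : EuclideanSpace ℝ (Fin d)) 1)).toReal with hω
  set c₀ : ℝ := (d : ℝ) * ω / 2 with hc₀
  have hc₀nn : 0 ≤ c₀ := by
    rw [hc₀]
    have : (0:ℝ) ≤ ω := ENNReal.toReal_nonneg
    positivity
  set B : ℝ := ∫ x, (u x) ^ 2 with hB
  have hBnn : 0 ≤ B := integral_nonneg fun x => sq_nonneg _
  rcases eq_or_lt_of_le hBnn with hB0 | hBpos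
  · rw [← hB0, mul_zero, ENNReal.ofReal_zero]
    exact bot_le
  rcases Nat.eq_zero_or_pos d with hd | hd
  · subst hd
    rw [hc₀] at hc₀nn ⊢
    norm_num
  -- geometry: a radius beyond which points are outside Ω
  obtain ⟨R, hR⟩ := hΩbdd.subset_closedBall 0
  set ρ : ℝ := 2 * max R 0 + 1 with hρdef
  have hρ : 0 < ρ := by
    have := le_max_right R 0
    rw [hρdef]; linarith
  have hsep : ∀ x ∈ Ω, ∀ y ∈ Ω, ‖x - y‖ < ρ := by
    intro x hx y hy
    have hx' : ‖x‖ ≤ R := by simpa [Metric.mem_closedBall, dist_zero_right] using hR hx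
    have hy' : ‖y‖ ≤ R := by simpa [Metric.mem_closedBall, dist_zero_right] using hR hy
    have h1 : ‖x - y‖ ≤ ‖x‖ + ‖y‖ := norm_sub_le x y
    have h2 : R ≤ max R 0 := le_max_left R 0
    rw [hρdef]; linarith
  -- per-n quantities
  set Bn : ℕ → ℝ := fun n => ∫ x, (un n x) ^ 2 with hBn
  have hBnnn : ∀ n, 0 ≤ Bn n := fun n => integral_nonneg fun x => sq_nonneg _
  have hlint : ∀ n, (∫⁻ x, ENNReal.ofReal (un n x ^ 2)) = ENNReal.ofReal (Bn n) := by
    intro n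
    rw [hBn]
    exact (ofReal_integral_eq_lintegral_ofReal (hun n).integrable_sq
      (Filter.Eventually.of_forall fun x => sq_nonneg _)).symm
  have key : ∀ n, ENNReal.ofReal (c₀ * ρ ^ (-(2 * s n)) * Bn n)
      ≤ ENNReal.ofReal (s n) * gagliardo d (s n) (un n) := by
    intro n
    have := key_est d hd Ω ρ hρ hsep (s n) (hs n).1 (un n)
      (hun n).aestronglyMeasurable.aemeasurable (hunsupp n)
    rw [hlint n] at this
    refine le_trans (le_of_eq ?_) this
    rw [ENNReal.ofReal_mul (by positivity)]
  -- weak convergence of the pairing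
  have hL : Tendsto (fun n => ∫ x, un n x * u x) atTop (𝓝 B) := by
    have := hweak u hu
    have h2 : (∫ x, u x * u x) = B := by
      rw [hB]
      congr 1
      funext x
      rw [sq]
    rwa [h2] at this
  -- Cauchy–Schwarz square bound
  have hCS : ∀ n, (∫ x, un n x * u x) ^ 2 ≤ Bn n * B :=
    fun n => cauchy_schwarz_int u (un n) hu (hun n)
  -- the comparison sequence
  set r : ℕ → ℝ := fun n => c₀ * ρ ^ (-(2 * s n)) * ((∫ x, un n x * u x) ^ 2 / B) with hr
  have hrle : ∀ n, r n ≤ c₀ * ρ ^ (-(2 * s n)) * Bn n := by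
    intro n
    apply mul_le_mul_of_nonneg_left _ (by positivity)
    rw [div_le_iff₀ hBpos]
    calc (∫ x, un n x * u x) ^ 2 ≤ Bn n * B := hCS n
      _ = Bn n * B := rfl
  have hrtend : Tendsto r atTop (𝓝 (c₀ * B)) := by
    have h1 : Tendsto (fun n => ρ ^ (-(2 * s n))) atTop (𝓝 1) := by
      have hexp : Tendsto (fun n => -(2 * s n)) atTop (𝓝 0) := by
        have := hs0.const_mul (2:ℝ)
        simpa using this.neg
      have hcont : ContinuousAt (fun t : ℝ => ρ ^ t) 0 :=
        Real.continuousAt_const_rpow (ne_of_gt hρ)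
      have := hcont.tendsto.comp hexp
      simpa [Real.rpow_zero, Function.comp_def] using this
    have h2 : Tendsto (fun n => (∫ x, un n x * u x) ^ 2 / B) atTop (𝓝 (B ^ 2 / B)) :=
      (hL.pow 2).div_const B
    have h3 := (tendsto_const_nhds (x := c₀)).mul (h1.mul h2)
    have h4 : c₀ * (1 * (B ^ 2 / B)) = c₀ * B := by
      field_simp
    rw [h4] at h3
    convert h3 using 2
    rw [hr]
    ring
  -- pass to ℝ≥0∞ and conclude
  have hlim : Tendsto (fun n => ENNReal.ofReal (r n)) atTop (𝓝 (ENNReal.ofReal (c₀ * B))) :=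
    (ENNReal.continuous_ofReal.tendsto _).comp hrtend
  calc ENNReal.ofReal (c₀ * B)
      = Filter.liminf (fun n => ENNReal.ofReal (r n)) atTop := hlim.liminf_eq.symm
    _ ≤ Filter.liminf (fun n => ENNReal.ofReal (s n) * gagliardo d (s n) (un n)) atTop := by
        exact Filter.liminf_le_liminf (Filter.Eventually.of_forall fun n =>
          le_trans (ENNReal.ofReal_le_ofReal (hrle n)) (key n))
end

section
/- There exists a constant C(d) > 0 such that for every v ∈ L²(ℝ^d), every h ∈ ℝ^d, every bounded open set Ω' ⊂ ℝ^d, and every 0 < ρ ≤ |h|: ‖τ_h v − v‖²_{L²(Ω')} ≤ C(d) (|h|²/ρ^{d+2}) ∫_{B_ρ} ‖τ_y v − v‖²_{L²(Ω'_{|h|})} dy, where τ_h v(·) = v(·+h) and Ω'_t = {x : dist(x, Ω') < t}. -/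
open MeasureTheory Filter Topology ENNReal

set_option maxHeartbeats 2000000 in
/-- estimate of the `L²` distance of a function from its shift. -/
theorem stmt13 (d : ℕ) (hd : 1 ≤ d) :
    ∃ C : ℝ, 0 < C ∧
      ∀ (v : EuclideanSpace ℝ (Fin d) → ℝ), MemLp v 2 volume →
      ∀ (h : EuclideanSpace ℝ (Fin d)) (Ω' : Set (EuclideanSpace ℝ (Fin d))),
        IsOpen Ω' → Bornology.IsBounded Ω' →
      ∀ ρ : ℝ, 0 < ρ → ρ ≤ ‖h‖ →
        (∫⁻ x in Ω', ENNReal.ofReal ((v (x + h) - v x) ^ 2))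
          ≤ ENNReal.ofReal (C * ‖h‖ ^ 2 / ρ ^ ((d : ℝ) + 2)) *
            ∫⁻ y in Metric.ball (0 : EuclideanSpace ℝ (Fin d)) ρ,
              ∫⁻ x in Metric.thickening ‖h‖ Ω', ENNReal.ofReal ((v (x + y) - v x) ^ 2) := by
  classical
  set μ1 : ℝ≥0∞ := volume (Metric.ball (0 : EuclideanSpace ℝ (Fin d)) 1) with hμ1def
  have hμ1pos : 0 < μ1 := Metric.measure_ball_pos _ _ one_pos
  have hμ1top : μ1 < ⊤ := measure_ball_lt_top
  clear_value μ1
  have hω : 0 < μ1.toReal := ENNReal.toReal_pos hμ1pos.ne' hμ1top.ne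
  refine ⟨144 * 4 ^ d / μ1.toReal, by positivity, ?_⟩
  intro v hv h Ω' hΩo hΩb ρ hρ hρh
  have hh : 0 < ‖h‖ := lt_of_lt_of_le hρ hρh
  -- replace v by a measurable representative w
  obtain ⟨w, hwm, hvw⟩ : ∃ w : EuclideanSpace ℝ (Fin d) → ℝ,
      Measurable w ∧ v =ᵐ[volume] w :=
    ⟨hv.1.mk v, hv.1.stronglyMeasurable_mk.measurable, hv.1.ae_eq_mk⟩
  have key : ∀ (c : EuclideanSpace ℝ (Fin d)) (s : Set (EuclideanSpace ℝ (Fin d))),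
      (∫⁻ x in s, ENNReal.ofReal ((v (x + c) - v x) ^ 2))
        = ∫⁻ x in s, ENNReal.ofReal ((w (x + c) - w x) ^ 2) := by
    intro c s
    refine lintegral_congr_ae (ae_restrict_of_ae ?_)
    have h1 : (fun x => v (x + c)) =ᵐ[volume] fun x => w (x + c) :=
      (measurePreserving_add_right volume c).quasiMeasurePreserving.ae_eq hvw
    filter_upwards [h1, hvw] with x hx1 hx2
    rw [hx1, hx2]
  rw [key h Ω']
  have hRHS : (∫⁻ y in Metric.ball (0 : EuclideanSpace ℝ (Fin d)) ρ,
        ∫⁻ x in Metric.thickening ‖h‖ Ω', ENNReal.ofReal ((v (x + y) - v x) ^ 2))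
      = ∫⁻ y in Metric.ball (0 : EuclideanSpace ℝ (Fin d)) ρ,
        ∫⁻ x in Metric.thickening ‖h‖ Ω', ENNReal.ofReal ((w (x + y) - w x) ^ 2) :=
    lintegral_congr fun y => key y _
  rw [hRHS]
  clear key hRHS hvw hv v
  -- notation, made opaque to keep elaboration fast
  set T : Set (EuclideanSpace ℝ (Fin d)) := Metric.thickening ‖h‖ Ω' with hTdef
  set g : EuclideanSpace ℝ (Fin d) → EuclideanSpace ℝ (Fin d) → ℝ≥0∞ :=
    fun c x => ENNReal.ofReal ((w (x + c) - w x) ^ 2) with hgdef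
  have hgm : ∀ c, Measurable (g c) := fun c =>
    (((hwm.comp (measurable_add_const c)).sub hwm).pow_const 2).ennreal_ofReal
  have hg : ∀ c x, g c x = ENNReal.ofReal ((w (x + c) - w x) ^ 2) := fun _ _ => rfl
  clear_value g
  set K : EuclideanSpace ℝ (Fin d) → ℝ≥0∞ := fun z => ∫⁻ x in T, g z x with hKdef
  have hgm2 : Measurable fun p : EuclideanSpace ℝ (Fin d) × EuclideanSpace ℝ (Fin d) =>
      ENNReal.ofReal ((w (p.2 + p.1) - w p.2) ^ 2) :=
    (((hwm.comp (measurable_snd.add measurable_fst)).sub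
      (hwm.comp measurable_snd)).pow_const 2).ennreal_ofReal
  have hKm : Measurable K := by
    rw [hKdef]
    simp only [hg]
    exact hgm2.lintegral_prod_right'
  have hK : ∀ z, K z = ∫⁻ x in T, g z x := fun _ => rfl
  clear_value K
  clear_value T
  set X : ℝ≥0∞ := ∫⁻ z in Metric.ball (0 : EuclideanSpace ℝ (Fin d)) ρ, K z with hXdef
  clear_value X
  have hgoal : (∫⁻ y in Metric.ball (0 : EuclideanSpace ℝ (Fin d)) ρ,
      ∫⁻ x in T, ENNReal.ofReal ((w (x + y) - w x) ^ 2)) = X := by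
    rw [hXdef]
    refine lintegral_congr fun y => ?_
    rw [hK y]
    exact lintegral_congr fun x => (hg y x).symm
  rw [hgoal]
  set B : Set (EuclideanSpace ℝ (Fin d)) := Metric.ball 0 (ρ / 4) with hBdef
  set vB : ℝ≥0∞ := volume B with hvBdef
  have hvB0 : vB ≠ 0 := (Metric.measure_ball_pos _ _ (by linarith : (0:ℝ) < ρ / 4)).ne'
  have hvBtop : vB ≠ ⊤ := measure_ball_lt_top.ne
  have hvBeq : vB = ENNReal.ofReal ((ρ / 4) ^ d) * μ1 := by
    rw [hvBdef, hBdef, Measure.addHaar_ball_of_pos _ _ (by linarith : (0:ℝ) < ρ / 4),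
      finrank_euclideanSpace, Fintype.card_fin, ← hμ1def]
  clear_value vB
  clear_value B
  -- core averaging lemma
  have core : ∀ e : EuclideanSpace ℝ (Fin d), ‖e‖ ≤ ρ / 2 →
      ∀ A : Set (EuclideanSpace ℝ (Fin d)),
        (∀ a ∈ A, ∀ y : EuclideanSpace ℝ (Fin d), ‖y‖ < ρ / 4 → a + y ∈ T) →
        (∫⁻ x in A, g e x) ≤ vB⁻¹ * (4 * X) := by
    intro e he A hA
    have hAT : A ⊆ T := fun a ha => by
      have := hA a ha 0 (by simpa using by linarith)
      simpa using this
    have pointwise : ∀ y ∈ B, (∫⁻ x in A, g e x) ≤ 2 * K (e - y) + 2 * K y := by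
      intro y hy
      have hy' : ‖y‖ < ρ / 4 := by
        rw [hBdef, Metric.mem_ball, dist_zero_right] at hy
        exact hy
      have step1 : (∫⁻ x in A, g e x)
          ≤ ∫⁻ x in A, (2 * g (e - y) (x + y) + 2 * g y x) := by
        refine lintegral_mono fun x => ?_
        have hxe : x + e = x + y + (e - y) := by abel
        rw [hg, hg, hg, hxe]
        set a := w (x + y + (e - y))
        set b := w x
        set c := w (x + y)
        have hr : (a - b) ^ 2 ≤ 2 * (a - c) ^ 2 + 2 * (c - b) ^ 2 := by
          nlinarith [sq_nonneg (a - 2 * c + b)]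
        calc ENNReal.ofReal ((a - b) ^ 2)
            ≤ ENNReal.ofReal (2 * (a - c) ^ 2 + 2 * (c - b) ^ 2) :=
              ENNReal.ofReal_le_ofReal hr
          _ = ENNReal.ofReal (2 * (a - c) ^ 2) + ENNReal.ofReal (2 * (c - b) ^ 2) :=
              ENNReal.ofReal_add (by positivity) (by positivity)
          _ = 2 * ENNReal.ofReal ((a - c) ^ 2) + 2 * ENNReal.ofReal ((c - b) ^ 2) := by
              rw [ENNReal.ofReal_mul (by norm_num), ENNReal.ofReal_mul (by norm_num)]
              norm_num
      have m1 : Measurable fun x => g (e - y) (x + y) :=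
        (hgm (e - y)).comp (measurable_add_const y)
      have step2 : (∫⁻ x in A, (2 * g (e - y) (x + y) + 2 * g y x))
          = 2 * (∫⁻ x in A, g (e - y) (x + y)) + 2 * ∫⁻ x in A, g y x := by
        rw [lintegral_add_left (m1.const_mul 2), lintegral_const_mul 2 m1,
          lintegral_const_mul 2 (hgm y)]
      have step3 : (∫⁻ x in A, g (e - y) (x + y)) ≤ K (e - y) := by
        rw [(measurePreserving_add_right volume y).setLIntegral_comp_emb
          (MeasurableEquiv.addRight y).measurableEmbedding (g (e - y)) A, hK]
        refine lintegral_mono_set ?_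
        rintro _ ⟨a, ha, rfl⟩
        exact hA a ha y hy'
      have step4 : (∫⁻ x in A, g y x) ≤ K y := by
        rw [hK]
        exact lintegral_mono_set hAT
      calc (∫⁻ x in A, g e x)
          ≤ 2 * (∫⁻ x in A, g (e - y) (x + y)) + 2 * ∫⁻ x in A, g y x :=
            step1.trans step2.le
        _ ≤ 2 * K (e - y) + 2 * K y := by gcongr
    have avg : vB * (∫⁻ x in A, g e x) ≤ 4 * X := by
      have h1 : vB * (∫⁻ x in A, g e x) = ∫⁻ _ in B, (∫⁻ x in A, g e x) := by
        rw [setLIntegral_const, hvBdef, mul_comm]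
      rw [h1]
      have m2 : Measurable fun y => K (e - y) :=
        hKm.comp (measurable_const.sub measurable_id)
      have h2 : (∫⁻ y in B, (∫⁻ x in A, g e x))
          ≤ ∫⁻ y in B, (2 * K (e - y) + 2 * K y) := by
        refine setLIntegral_mono ?_ pointwise
        exact (m2.const_mul 2).add (hKm.const_mul 2)
      have h3 : (∫⁻ y in B, (2 * K (e - y) + 2 * K y))
          = 2 * (∫⁻ y in B, K (e - y)) + 2 * ∫⁻ y in B, K y := by
        rw [lintegral_add_left (m2.const_mul 2), lintegral_const_mul 2 m2,
          lintegral_const_mul 2 hKm]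
      have h4 : (∫⁻ y in B, K (e - y)) ≤ X := by
        rw [show (fun y => K (e - y)) = fun y => K ((fun t => e - t) y) from rfl,
          (Measure.measurePreserving_sub_left volume e).setLIntegral_comp_emb
          (MeasurableEquiv.subLeft e).measurableEmbedding K B, hXdef]
        refine lintegral_mono_set ?_
        rintro _ ⟨y, hy, rfl⟩
        have hy' : ‖y‖ < ρ / 4 := by
          rw [hBdef, Metric.mem_ball, dist_zero_right] at hy
          exact hy
        have hey : ‖e - y‖ < ρ := by
          calc ‖e - y‖ ≤ ‖e‖ + ‖y‖ := norm_sub_le _ _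
            _ < ρ := by linarith
        rw [Metric.mem_ball, dist_zero_right]
        exact hey
      have h5 : (∫⁻ y in B, K y) ≤ X := by
        rw [hXdef, hBdef]
        exact lintegral_mono_set (Metric.ball_subset_ball (by linarith))
      calc (∫⁻ y in B, (∫⁻ x in A, g e x))
          ≤ 2 * (∫⁻ y in B, K (e - y)) + 2 * ∫⁻ y in B, K y := h2.trans h3.le
        _ ≤ 2 * X + 2 * X := by gcongr
        _ = 4 * X := by ring
    calc (∫⁻ x in A, g e x) = vB⁻¹ * (vB * ∫⁻ x in A, g e x) := by
          rw [← mul_assoc, ENNReal.inv_mul_cancel hvB0 hvBtop, one_mul]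
      _ ≤ vB⁻¹ * (4 * X) := by gcongr
  -- telescoping setup
  set N : ℕ := ⌈2 * ‖h‖ / ρ⌉₊ with hNdef
  have hN0' : (0:ℝ) < 2 * ‖h‖ / ρ := by positivity
  have hNge : 2 * ‖h‖ / ρ ≤ (N : ℝ) := Nat.le_ceil _
  have hNlt : (N : ℝ) < 2 * ‖h‖ / ρ + 1 := Nat.ceil_lt_add_one hN0'.le
  clear_value N
  have hN2 : (2:ℝ) ≤ (N:ℝ) := by
    refine le_trans ?_ hNge
    rw [le_div_iff₀ hρ]
    linarith
  have hNpos : 0 < N := by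
    have h0 : (0:ℝ) < (N:ℝ) := by linarith
    exact_mod_cast h0
  have hN0 : (N:ℝ) ≠ 0 := by positivity
  have hNle : (N : ℝ) ≤ 3 * ‖h‖ / ρ := by
    have h2 : (1:ℝ) ≤ ‖h‖ / ρ := (one_le_div hρ).2 hρh
    have h3 : 2 * ‖h‖ / ρ + 1 ≤ 3 * ‖h‖ / ρ := by
      rw [div_add' _ _ _ hρ.ne', div_le_div_iff₀ hρ hρ]
      nlinarith
    linarith
  set e : EuclideanSpace ℝ (Fin d) := (N:ℝ)⁻¹ • h with hedef
  have hNe : (N:ℝ) • e = h := smul_inv_smul₀ hN0 h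
  have hne : ‖e‖ = ‖h‖ / (N:ℝ) := by
    rw [hedef, norm_smul, norm_inv, Real.norm_natCast, div_eq_inv_mul]
  clear_value e
  have he2 : ‖e‖ ≤ ρ / 2 := by
    rw [hne, div_le_div_iff₀ (by positivity) (by norm_num)]
    have h1 := mul_le_mul_of_nonneg_right hNge hρ.le
    have h2 : 2 * ‖h‖ / ρ * ρ = 2 * ‖h‖ := by field_simp
    linarith
  have he3 : ρ / 3 ≤ ‖e‖ := by
    rw [hne, div_le_div_iff₀ (by norm_num) (by positivity)]
    have h1 := mul_le_mul_of_nonneg_left hNle hρ.le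
    have h2 : ρ * (3 * ‖h‖ / ρ) = ‖h‖ * 3 := by field_simp
    linarith
  have hNnorm : (N:ℝ) * ‖e‖ = ‖h‖ := by
    rw [hne, mul_comm, div_mul_cancel₀ _ hN0]
  -- telescoping pointwise bound
  have tele : ∀ x : EuclideanSpace ℝ (Fin d),
      ENNReal.ofReal ((w (x + h) - w x) ^ 2)
        ≤ (N : ℝ≥0∞) * ∑ k ∈ Finset.range N, g e (x + (k:ℝ) • e) := by
    intro x
    have hsum : w (x + h) - w x
        = ∑ k ∈ Finset.range N, (w (x + ((k + 1 : ℕ) : ℝ) • e) - w (x + (k:ℝ) • e)) := by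
      rw [Finset.sum_range_sub (fun k : ℕ => w (x + (k:ℝ) • e)) N, hNe, Nat.cast_zero,
        zero_smul, add_zero]
    have hsq : (w (x + h) - w x) ^ 2
        ≤ (N:ℝ) * ∑ k ∈ Finset.range N,
            (w (x + ((k + 1 : ℕ) : ℝ) • e) - w (x + (k:ℝ) • e)) ^ 2 := by
      rw [hsum]
      have hc := sq_sum_le_card_mul_sum_sq (s := Finset.range N)
        (f := fun k : ℕ => w (x + ((k + 1 : ℕ) : ℝ) • e) - w (x + (k:ℝ) • e))
      rwa [Finset.card_range] at hc
    calc ENNReal.ofReal ((w (x + h) - w x) ^ 2)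
        ≤ ENNReal.ofReal ((N:ℝ) * ∑ k ∈ Finset.range N,
            (w (x + ((k + 1 : ℕ) : ℝ) • e) - w (x + (k:ℝ) • e)) ^ 2) :=
          ENNReal.ofReal_le_ofReal hsq
      _ = (N : ℝ≥0∞) * ∑ k ∈ Finset.range N,
            ENNReal.ofReal ((w (x + ((k + 1 : ℕ) : ℝ) • e) - w (x + (k:ℝ) • e)) ^ 2) := by
          rw [ENNReal.ofReal_mul (Nat.cast_nonneg N), ENNReal.ofReal_natCast,
            ENNReal.ofReal_sum_of_nonneg (fun i _ => sq_nonneg _)]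
      _ = (N : ℝ≥0∞) * ∑ k ∈ Finset.range N, g e (x + (k:ℝ) • e) := by
          congr 1
          refine Finset.sum_congr rfl fun k _ => ?_
          have hx : x + ((k + 1 : ℕ) : ℝ) • e = (x + (k:ℝ) • e) + e := by
            rw [Nat.cast_add, Nat.cast_one, add_smul, one_smul]; abel
          rw [hx, hg]
  -- the per-k estimate
  have perk : ∀ k ∈ Finset.range N,
      (∫⁻ x in Ω', g e (x + (k:ℝ) • e)) ≤ vB⁻¹ * (4 * X) := by
    intro k hk
    have hkN : (k:ℝ) ≤ (N:ℝ) - 1 := by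
      have h1 : k + 1 ≤ N := Finset.mem_range.1 hk
      have h2 := Nat.cast_le (α := ℝ).2 h1
      push_cast at h2
      linarith
    rw [(measurePreserving_add_right volume ((k:ℝ) • e)).setLIntegral_comp_emb
      (MeasurableEquiv.addRight ((k:ℝ) • e)).measurableEmbedding (g e) Ω']
    refine core e he2 _ ?_
    rintro _ ⟨a, ha, rfl⟩ y hy
    rw [hTdef]
    refine Metric.mem_thickening_iff.2 ⟨a, ha, ?_⟩
    have hdist : dist (a + (k:ℝ) • e + y) a = ‖(k:ℝ) • e + y‖ := by
      rw [dist_eq_norm]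
      congr 1
      abel
    rw [hdist]
    have h1 : ‖(k:ℝ) • e + y‖ ≤ (k:ℝ) * ‖e‖ + ‖y‖ := by
      calc ‖(k:ℝ) • e + y‖ ≤ ‖(k:ℝ) • e‖ + ‖y‖ := norm_add_le _ _
        _ = (k:ℝ) * ‖e‖ + ‖y‖ := by rw [norm_smul, Real.norm_natCast]
    have h2 : (k:ℝ) * ‖e‖ ≤ ((N:ℝ) - 1) * ‖e‖ :=
      mul_le_mul_of_nonneg_right hkN (norm_nonneg _)
    have h3 : ((N:ℝ) - 1) * ‖e‖ = ‖h‖ - ‖e‖ := by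
      rw [sub_mul, one_mul, hNnorm]
    calc ‖(k:ℝ) • e + y‖ ≤ (k:ℝ) * ‖e‖ + ‖y‖ := h1
      _ ≤ (‖h‖ - ‖e‖) + ‖y‖ := by rw [← h3]; linarith
      _ < ‖h‖ := by linarith
  -- assemble
  have main : (∫⁻ x in Ω', ENNReal.ofReal ((w (x + h) - w x) ^ 2))
      ≤ (N : ℝ≥0∞) * ((N : ℝ≥0∞) * (vB⁻¹ * (4 * X))) := by
    have m3 : ∀ k : ℕ, Measurable fun x => g e (x + (k:ℝ) • e) := fun k =>
      (hgm e).comp (measurable_add_const _)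
    calc (∫⁻ x in Ω', ENNReal.ofReal ((w (x + h) - w x) ^ 2))
        ≤ ∫⁻ x in Ω', (N : ℝ≥0∞) * ∑ k ∈ Finset.range N, g e (x + (k:ℝ) • e) :=
          lintegral_mono tele
      _ = (N : ℝ≥0∞) * ∫⁻ x in Ω', ∑ k ∈ Finset.range N, g e (x + (k:ℝ) • e) :=
          lintegral_const_mul _ (Finset.measurable_sum _ fun k _ => m3 k)
      _ = (N : ℝ≥0∞) * ∑ k ∈ Finset.range N, ∫⁻ x in Ω', g e (x + (k:ℝ) • e) := by
          rw [lintegral_finset_sum _ fun k _ => m3 k]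
      _ ≤ (N : ℝ≥0∞) * ∑ k ∈ Finset.range N, vB⁻¹ * (4 * X) := by
          gcongr with k hk
          exact perk k hk
      _ = (N : ℝ≥0∞) * ((N : ℝ≥0∞) * (vB⁻¹ * (4 * X))) := by
          rw [Finset.sum_const, Finset.card_range, nsmul_eq_mul]
  refine main.trans ?_
  -- final coefficient comparison
  have hm : (0:ℝ) < (ρ / 4) ^ d * μ1.toReal := by positivity
  have hvBinv : vB⁻¹ = ENNReal.ofReal (((ρ / 4) ^ d * μ1.toReal)⁻¹) := by
    have hvB' : vB = ENNReal.ofReal ((ρ / 4) ^ d * μ1.toReal) := by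
      rw [hvBeq, ENNReal.ofReal_mul (by positivity), ENNReal.ofReal_toReal hμ1top.ne]
    rw [hvB', ← ENNReal.ofReal_inv_of_pos hm]
  have hNρ : (N:ℝ) * ρ ≤ 3 * ‖h‖ := (le_div_iff₀ hρ).1 hNle
  have hN2'' : (N:ℝ) * (N:ℝ) * ρ ^ 2 ≤ 9 * ‖h‖ ^ 2 := by
    have hb : (0:ℝ) ≤ (N:ℝ) * ρ := by positivity
    have h2 := mul_self_le_mul_self hb hNρ
    nlinarith [h2]
  have hcoef : (N : ℝ≥0∞) * ((N : ℝ≥0∞) * (vB⁻¹ * 4))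
      ≤ ENNReal.ofReal (144 * 4 ^ d / μ1.toReal * ‖h‖ ^ 2 / ρ ^ ((d : ℝ) + 2)) := by
    have hNen : (N : ℝ≥0∞) = ENNReal.ofReal (N : ℝ) := (ENNReal.ofReal_natCast N).symm
    have h4 : (4 : ℝ≥0∞) = ENNReal.ofReal 4 := by norm_num
    rw [hNen, h4, hvBinv, ← ENNReal.ofReal_mul (by positivity),
      ← ENNReal.ofReal_mul (Nat.cast_nonneg N), ← ENNReal.ofReal_mul (Nat.cast_nonneg N)]
    refine ENNReal.ofReal_le_ofReal ?_
    have hrpow : ρ ^ ((d : ℝ) + 2) = ρ ^ (d + 2) := by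
      rw [show ((d : ℝ) + 2) = ((d + 2 : ℕ) : ℝ) by push_cast; ring, Real.rpow_natCast]
    rw [hrpow]
    have hρdpos : (0:ℝ) < ρ ^ d := by positivity
    have e1 : (N:ℝ) * ((N:ℝ) * (((ρ/4)^d * μ1.toReal)⁻¹ * 4))
        = ((N:ℝ) * (N:ℝ)) * (4 * 4 ^ d) / (ρ ^ d * μ1.toReal) := by
      rw [div_pow]
      field_simp
    have e2 : 144 * 4 ^ d / μ1.toReal * ‖h‖ ^ 2 / ρ ^ (d + 2)
        = 144 * 4 ^ d * ‖h‖ ^ 2 / (ρ ^ d * ρ ^ 2 * μ1.toReal) := by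
      rw [pow_add]
      field_simp
    rw [e1, e2, div_le_div_iff₀ (by positivity) (by positivity)]
    have hpos2 : (0:ℝ) ≤ 4 ^ d * (‖h‖ ^ 2 * (ρ ^ d * μ1.toReal)) := by positivity
    have hmul := mul_le_mul_of_nonneg_right hN2''
      (by positivity : (0:ℝ) ≤ 4 * 4 ^ d * ρ ^ d * μ1.toReal)
    nlinarith [hmul, hpos2]
  calc (N : ℝ≥0∞) * ((N : ℝ≥0∞) * (vB⁻¹ * (4 * X)))
      = ((N : ℝ≥0∞) * ((N : ℝ≥0∞) * (vB⁻¹ * 4))) * X := by ring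
    _ ≤ ENNReal.ofReal (144 * 4 ^ d / μ1.toReal * ‖h‖ ^ 2 / ρ ^ ((d : ℝ) + 2)) * X :=
        mul_le_mul_left hcoef X
end
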